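/- Let f(x) = x^{2g+1} - b·x - (p·c)/4 ∈ ℤ[1/2][x] be a Mori trinomial. Then there exists an odd prime ℓ ≠ p such that the reduction f(x) mod ℓ ∈ 𝔽_ℓ[x] has a double root ᾱ ∈ 𝔽_ℓ (a root of multiplicity exactly 2), and all other roots of f(x) mod ℓ in an algebraic closure of 𝔽_ℓ are simple. -/

import Mathlib

open Polynomial

noncomputable section

/-- `(g,p,b,c)` is a Mori quadruple. -/
def IsMoriQuadruple (g p : ℕ) (b c : ℤ) : Prop :=
  0 < g ∧ p.Prime ∧ Odd p ∧
    (∀ q : ℕ, q.Prime → q ∣ g → q ∣ (p - 1) / 2) ∧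
    orderOf (b : ZMod p) = p - 1 ∧
    Odd c ∧ IsCoprime b c ∧ IsCoprime b (2 * (g : ℤ) + 1) ∧ IsCoprime c (g : ℤ)

/-- The reduction modulo an odd prime `ℓ` of the Mori trinomial
`f = x^(2g+1) - b·x - (p·c)/4 ∈ ℤ[1/2][x]`; since `ℓ` is odd, `4` is invertible mod `ℓ`. -/
def moriPolyMod (g p : ℕ) (b c : ℤ) (ℓ : ℕ) : (ZMod ℓ)[X] :=
  X ^ (2 * g + 1) - C (b : ZMod ℓ) * X
    - C ((p : ZMod ℓ) * (c : ZMod ℓ) * (4 : ZMod ℓ)⁻¹)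



lemma odd_sq_zmod8 {m : ℤ} (hm : Odd m) : ((m : ZMod 8))^2 = 1 := by
  have hdvd : (8:ℤ) ∣ m^2 - 1 := by
    obtain ⟨k, rfl⟩ := hm
    obtain ⟨j, hj⟩ := Int.even_mul_succ_self k
    exact ⟨j, by linear_combination 4*hj⟩
  have : ((m^2 - 1 : ℤ) : ZMod 8) = 0 := by
    rw [ZMod.intCast_zmod_eq_zero_iff_dvd]; exact_mod_cast hdvd
  push_cast at this
  linear_combination this

lemma euler_contra (p : ℕ) [Fact p.Prime] (hpodd : Odd p) {b : ZMod p}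
    (hord : orderOf b = p - 1) {n : ℕ} (hn : Odd n)
    (h1 : (b ^ n) ^ ((p-1)/2) = 1) : False := by
  have hp := (Fact.out : p.Prime)
  have hp3 : 3 ≤ p := by
    have := hp.two_le; have h2 := Nat.odd_iff.mp hpodd; omega
  set m := (p-1)/2 with hmdef
  have hm : 2 * m = p - 1 := by
    have h2 := Nat.odd_iff.mp hpodd; omega
  have h1' : b ^ (n * m) = 1 := by rw [pow_mul]; exact h1
  have hdvd : 2 * m ∣ n * m := by
    rw [hm, ← hord]; exact orderOf_dvd_of_pow_eq_one h1'
  obtain ⟨k, hk⟩ := hdvd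
  have hmpos : 0 < m := by omega
  have hn2 : n = 2 * k :=
    Nat.eq_of_mul_eq_mul_right hmpos (by rw [hk]; ring)
  have := Nat.odd_iff.mp hn
  omega

lemma eval_d2_aux {K : Type*} [CommRing K] (α : K) (h₁ : K[X]) :
    eval α (derivative (derivative ((X - C α)^2 * h₁))) = 2 * eval α h₁ := by
  simp [derivative_mul, derivative_pow, derivative_sub, derivative_X, derivative_C,
    eval_mul, eval_add, eval_sub, eval_pow, sub_self]


lemma exists_good_ell (g p : ℕ) (b c : ℤ) (h : IsMoriQuadruple g p b c) :
    ∃ ℓ : ℕ, ℓ.Prime ∧ ℓ ≠ 2 ∧ ℓ ≠ p ∧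
      ¬((ℓ:ℤ) ∣ (2*(g:ℤ)+1)) ∧ ¬((ℓ:ℤ) ∣ (g:ℤ)) ∧ ¬((ℓ:ℤ) ∣ b) ∧ ¬((ℓ:ℤ) ∣ c) ∧
      (ℓ:ℤ) ∣ ((2*(g:ℤ)+1)^(2*g+1) * ((p:ℤ)*c)^(2*g) - (8*(g:ℤ))^(2*g) * b^(2*g+1)) := by
  obtain ⟨hg, hp, hpodd, hgdvd, hord, hcodd, hbc, hbn, hcg⟩ := h
  haveI : Fact p.Prime := ⟨hp⟩
  set T1 : ℤ := (2*(g:ℤ)+1)^(2*g+1) * ((p:ℤ)*c)^(2*g) with hT1def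
  set T2 : ℤ := (8*(g:ℤ))^(2*g) * b^(2*g+1) with hT2def
  set D : ℤ := T1 - T2 with hDdef
  have hp2 : p ≠ 2 := by
    intro h2; rw [h2] at hpodd; exact (by decide : ¬ Odd 2) hpodd
  have hp3 : 3 ≤ p := by have := hp.two_le; have := Nat.odd_iff.mp hpodd; omega
  have hpg : ¬ p ∣ g := by
    intro hdvd
    have := hgdvd p hp hdvd
    have := Nat.le_of_dvd (by omega) this
    omega
  have hbp : (b : ZMod p) ≠ 0 := by
    intro h0
    have h1 : (b:ZMod p) ^ (p-1) = 1 := hord ▸ pow_orderOf_eq_one _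
    rw [h0, zero_pow (by omega)] at h1
    exact zero_ne_one h1
  have h8g : ((8*(g:ℤ) : ℤ) : ZMod p) ≠ 0 := by
    rw [Ne, ZMod.intCast_zmod_eq_zero_iff_dvd]
    intro hdvd
    rcases (Int.Prime.dvd_mul' (by exact_mod_cast hp) hdvd) with h8 | hgg
    · have h23 : (p:ℤ) ∣ 2^3 := by norm_num at h8 ⊢; exact_mod_cast h8
      have := Int.Prime.dvd_pow' (by exact_mod_cast hp) h23
      have h2' : p ∣ 2 := by exact_mod_cast this
      exact hp2 ((Nat.prime_dvd_prime_iff_eq hp Nat.prime_two).mp h2')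
    · exact hpg (by exact_mod_cast hgg)
  have hDmodp : ((D:ℤ) : ZMod p) = -(((8*(g:ℤ):ℤ) : ZMod p))^(2*g) * ((b:ZMod p))^(2*g+1) := by
    rw [hDdef, hT1def, hT2def]
    push_cast
    rw [ZMod.natCast_self]
    simp only [zero_mul]
    rw [zero_pow (by omega : 2*g ≠ 0)]
    ring
  have hDmodp_ne : ((D:ℤ) : ZMod p) ≠ 0 := by
    rw [hDmodp]
    exact mul_ne_zero (neg_ne_zero.mpr (pow_ne_zero _ h8g)) (pow_ne_zero _ hbp)
  have hD0 : D ≠ 0 := by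
    intro h0; rw [h0] at hDmodp_ne; exact hDmodp_ne (by push_cast; ring)
  -- the ±1 exclusion
  have hsq : ∀ ε : ℤ, D = ε →
      ((((8*(g:ℤ):ℤ) : ZMod p))^g)^2 * ((b:ZMod p))^(2*g+1) = -((ε:ℤ) : ZMod p) := by
    intro ε hε
    have h5 := hDmodp
    rw [hε] at h5
    rw [← pow_mul]
    linear_combination h5
  have hm2 : 2 * ((p-1)/2) = p - 1 := by have := Nat.odd_iff.mp hpodd; omega
  have hb1 : ∀ y : ZMod p, y ≠ 0 →
      (y^2 * ((b:ZMod p))^(2*g+1))^((p-1)/2) = (((b:ZMod p))^(2*g+1))^((p-1)/2) := by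
    intro y hy
    rw [mul_pow, ← pow_mul, hm2, ZMod.pow_card_sub_one_eq_one hy, one_mul]
  have hy0 : (((8*(g:ℤ):ℤ) : ZMod p))^g ≠ 0 := pow_ne_zero _ h8g
  have hD1 : D ≠ -1 := by
    intro hε
    have h5 := hsq (-1) hε
    have h6 := congrArg (· ^ ((p-1)/2)) h5
    rw [hb1 _ hy0] at h6
    have h7 : (((b:ZMod p))^(2*g+1))^((p-1)/2) = 1 := by
      rw [h6]; push_cast; simp [one_pow]
    exact euler_contra p hpodd hord (⟨g, by ring⟩ : Odd (2*g+1)) h7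
  -- D mod 8
  have hD8 : ((D:ℤ) : ZMod 8) = ((2*(g:ℤ)+1 : ℤ) : ZMod 8) := by
    rw [hDdef, hT1def, hT2def]
    push_cast
    have h80 : (8 : ZMod 8) = 0 := by decide
    rw [h80]
    simp only [zero_mul]
    rw [zero_pow (by omega : 2*g ≠ 0)]
    have hpc : (((p:ℤ)*c : ℤ) : ZMod 8)^2 = 1 :=
      odd_sq_zmod8 (Odd.mul (by exact_mod_cast hpodd) hcodd)
    push_cast at hpc
    have hnodd : ((2*(g:ℤ)+1 : ℤ) : ZMod 8)^2 = 1 := odd_sq_zmod8 ⟨(g:ℤ), by ring⟩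
    push_cast at hnodd
    have hpow : ∀ x : ZMod 8, x^2 = 1 → x^(2*g) = 1 := fun x hx => by
      rw [pow_mul, hx, one_pow]
    rw [pow_succ, hpow _ hnodd, hpow _ hpc]
    ring
  have hDne1 : D ≠ 1 := by
    intro hε
    -- mod 8: 2g ≡ 0 mod 8 so g even
    have h8' := hD8
    rw [hε] at h8'
    have hg2 : ((2*g : ℕ) : ZMod 8) = 0 := by
      push_cast
      push_cast at h8'
      linear_combination -h8'
    have hgdvd8 : (8:ℕ) ∣ 2*g := by rwa [ZMod.natCast_eq_zero_iff] at hg2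
    have hgeven : 2 ∣ g := by obtain ⟨k, hk⟩ := hgdvd8; omega
    have hmeven : Even ((p-1)/2) := by
      have := hgdvd 2 Nat.prime_two hgeven
      exact (even_iff_two_dvd).mpr this
    -- mod p
    have h5 := hsq 1 hε
    have h6 := congrArg (· ^ ((p-1)/2)) h5
    rw [hb1 _ hy0] at h6
    have h7 : (((b:ZMod p))^(2*g+1))^((p-1)/2) = 1 := by
      rw [h6]; push_cast
      rw [Even.neg_one_pow hmeven]
    exact euler_contra p hpodd hord (⟨g, by ring⟩ : Odd (2*g+1)) h7
  -- D is odd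
  have hT2dvd : (2:ℤ) ∣ T2 := by
    rw [hT2def]
    exact Dvd.dvd.mul_right (dvd_pow (⟨4*(g:ℤ), by ring⟩ : (2:ℤ) ∣ 8*(g:ℤ)) (by omega)) _
  have hDodd : Odd D := by
    have hT1odd : Odd T1 := by
      rw [hT1def]
      exact Odd.mul (Odd.pow ⟨(g:ℤ), by ring⟩)
        (Odd.pow (Odd.mul (by exact_mod_cast hpodd) hcodd))
    exact hT1odd.sub_even ((even_iff_two_dvd).mpr hT2dvd)
  -- choose ℓ
  have habs1 : D.natAbs ≠ 1 := by
    intro h1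
    rcases Int.natAbs_eq_iff.mp h1 with h | h
    · exact hDne1 (by exact_mod_cast h)
    · exact hD1 (by exact_mod_cast h)
  set ℓ := D.natAbs.minFac with hldef
  have hℓ : ℓ.Prime := Nat.minFac_prime habs1
  have hℓD : (ℓ:ℤ) ∣ D :=
    dvd_trans (Int.natCast_dvd_natCast.mpr (Nat.minFac_dvd _)) (Int.natAbs_dvd.mpr dvd_rfl)
  have hl2 : ℓ ≠ 2 := by
    intro h2
    rw [h2] at hℓD
    rw [Int.odd_iff] at hDodd
    omega
  have hlp : ℓ ≠ p := by
    intro hep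
    rw [hep] at hℓD
    exact hDmodp_ne ((ZMod.intCast_zmod_eq_zero_iff_dvd _ _).mpr hℓD)
  have hℓZ : Prime (ℓ:ℤ) := Nat.prime_iff_prime_int.mp hℓ
  have hunit : ¬ IsUnit (ℓ:ℤ) := hℓZ.not_unit
  have h12 : (ℓ:ℤ) ∣ T1 → (ℓ:ℤ) ∣ T2 := by
    intro hh
    have h3 := dvd_sub hh hℓD
    have he : T1 - D = T2 := by rw [hDdef]; ring
    rwa [he] at h3
  have h21 : (ℓ:ℤ) ∣ T2 → (ℓ:ℤ) ∣ T1 := by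
    intro hh
    have h3 := dvd_add hℓD hh
    have he : D + T2 = T1 := by rw [hDdef]; ring
    rwa [he] at h3
  have hlp' : ¬ (ℓ:ℤ) ∣ (p:ℤ) := by
    intro hdvd
    have : ℓ ∣ p := by exact_mod_cast hdvd
    exact hlp ((Nat.prime_dvd_prime_iff_eq hℓ hp).mp this)
  have hl2' : ¬ (ℓ:ℤ) ∣ 2 := by
    intro hdvd
    have : ℓ ∣ 2 := by exact_mod_cast hdvd
    exact hl2 ((Nat.prime_dvd_prime_iff_eq hℓ Nat.prime_two).mp this)
  have hl8 : ¬ (ℓ:ℤ) ∣ 8 := by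
    intro hdvd
    have h23 : (ℓ:ℤ) ∣ 2^3 := by norm_num; exact hdvd
    exact hl2' (hℓZ.dvd_of_dvd_pow h23)
  have hln : ¬ (ℓ:ℤ) ∣ (2*(g:ℤ)+1) := by
    intro hdvd
    have hT1 : (ℓ:ℤ) ∣ T1 := dvd_mul_of_dvd_left (dvd_pow hdvd (by omega)) _
    rcases (hℓZ.dvd_mul.mp (hT2def ▸ h12 hT1)) with h8 | hb'
    · rcases hℓZ.dvd_mul.mp (hℓZ.dvd_of_dvd_pow h8) with h8' | hgg
      · exact hl8 h8'
      · have h9 := dvd_sub hdvd (Dvd.dvd.mul_left hgg 2)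
        have h10 : (2*(g:ℤ)+1) - 2*(g:ℤ) = 1 := by ring
        rw [h10] at h9
        exact hunit (isUnit_of_dvd_one h9)
    · exact hunit (hbn.isUnit_of_dvd' (hℓZ.dvd_of_dvd_pow hb') hdvd)
  have hlg : ¬ (ℓ:ℤ) ∣ (g:ℤ) := by
    intro hdvd
    have hT2 : (ℓ:ℤ) ∣ T2 :=
      hT2def ▸ dvd_mul_of_dvd_left (dvd_pow (hdvd.mul_left 8) (by omega)) _
    rcases (hℓZ.dvd_mul.mp (hT1def ▸ h21 hT2)) with hn' | hpc
    · have hn'' := hℓZ.dvd_of_dvd_pow hn'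
      have h9 := dvd_sub hn'' (Dvd.dvd.mul_left hdvd 2)
      have h10 : (2*(g:ℤ)+1) - 2*(g:ℤ) = 1 := by ring
      rw [h10] at h9
      exact hunit (isUnit_of_dvd_one h9)
    · rcases hℓZ.dvd_mul.mp (hℓZ.dvd_of_dvd_pow hpc) with hp' | hc'
      · exact hlp' hp'
      · exact hunit (hcg.isUnit_of_dvd' hc' hdvd)
  have hlb : ¬ (ℓ:ℤ) ∣ b := by
    intro hdvd
    have hT2 : (ℓ:ℤ) ∣ T2 := hT2def ▸ dvd_mul_of_dvd_right (dvd_pow hdvd (by omega)) _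
    rcases (hℓZ.dvd_mul.mp (hT1def ▸ h21 hT2)) with hn' | hpc
    · exact hln (hℓZ.dvd_of_dvd_pow hn')
    · rcases hℓZ.dvd_mul.mp (hℓZ.dvd_of_dvd_pow hpc) with hp' | hc'
      · exact hlp' hp'
      · exact hunit (hbc.isUnit_of_dvd' hdvd hc')
  have hlc : ¬ (ℓ:ℤ) ∣ c := by
    intro hdvd
    have hT1 : (ℓ:ℤ) ∣ T1 :=
      hT1def ▸ dvd_mul_of_dvd_right (dvd_pow (hdvd.mul_left _) (by omega)) _
    rcases (hℓZ.dvd_mul.mp (hT2def ▸ h12 hT1)) with h8 | hb'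
    · rcases hℓZ.dvd_mul.mp (hℓZ.dvd_of_dvd_pow h8) with h8' | hgg
      · exact hl8 h8'
      · exact hunit (hcg.isUnit_of_dvd' hdvd hgg)
    · exact hunit (hbc.isUnit_of_dvd' (hℓZ.dvd_of_dvd_pow hb') hdvd)
  exact ⟨ℓ, hℓ, hl2, hlp, hln, hlg, hlb, hlc, hℓD⟩

/-- For a Mori trinomial `f` there exists an odd prime `ℓ ≠ p` such that `f mod ℓ` has a
double root `α ∈ 𝔽_ℓ` (multiplicity exactly `2`) while all other roots of `f mod ℓ` in an
algebraic closure of `𝔽_ℓ` are simple: `f mod ℓ = (x-α)²·h` with `h(α) ≠ 0` and `h`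
separable. -/
theorem mori_trinomial_exists_double_root_mod_ell
    (g p : ℕ) (b c : ℤ) (h : IsMoriQuadruple g p b c) :
    ∃ ℓ : ℕ, ℓ.Prime ∧ ℓ ≠ 2 ∧ ℓ ≠ p ∧
      ∃ α : ZMod ℓ, ∃ h₁ : (ZMod ℓ)[X],
        moriPolyMod g p b c ℓ = (X - C α) ^ 2 * h₁ ∧
        h₁.eval α ≠ 0 ∧ h₁.Separable := by
  obtain ⟨ℓ, hℓ, hl2, hlp, hln, hlg, hlb, hlc, hℓD⟩ := exists_good_ell g p b c h
  obtain ⟨hg, hp, -⟩ := h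
  haveI : Fact ℓ.Prime := ⟨hℓ⟩
  refine ⟨ℓ, hℓ, hl2, hlp, ?_⟩
  set K := ZMod ℓ with hKdef
  set B : K := ((b:ℤ) : K) with hBdef
  set A : K := (p : K) * ((c:ℤ) : K) * (4 : K)⁻¹ with hAdef
  set NN : K := ((2*g+1 : ℕ) : K) with hNNdef
  set GG : K := ((2*g : ℕ) : K) with hGGdef
  have hB0 : B ≠ 0 := by
    rw [hBdef, Ne, ZMod.intCast_zmod_eq_zero_iff_dvd]; exact hlb
  have hNN0 : NN ≠ 0 := by
    rw [hNNdef, Ne, ZMod.natCast_eq_zero_iff]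
    intro hdvd; exact hln (by exact_mod_cast Int.natCast_dvd_natCast.mpr hdvd)
  have hl2n : ¬ (ℓ:ℤ) ∣ 2 := by
    intro hdvd
    have : ℓ ∣ 2 := by exact_mod_cast hdvd
    exact hl2 ((Nat.prime_dvd_prime_iff_eq hℓ Nat.prime_two).mp this)
  have hGG0 : GG ≠ 0 := by
    rw [hGGdef, Ne, ZMod.natCast_eq_zero_iff]
    intro hdvd
    have : (ℓ:ℤ) ∣ 2*(g:ℤ) := by exact_mod_cast Int.natCast_dvd_natCast.mpr hdvd
    rcases (Nat.prime_iff_prime_int.mp hℓ).dvd_mul.mp this with h2 | hgg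
    · exact hl2n h2
    · exact hlg hgg
  have h20 : (2 : K) ≠ 0 := by
    intro h0
    have : ((2:ℕ) : K) = 0 := by exact_mod_cast h0
    rw [ZMod.natCast_eq_zero_iff] at this
    exact hl2n (by exact_mod_cast Int.natCast_dvd_natCast.mpr this)
  have h40 : (4 : K) ≠ 0 := by
    have h4 : (4 : K) = 2 * 2 := by norm_num
    rw [h4]; exact mul_ne_zero h20 h20
  have hP0 : (p : K) ≠ 0 := by
    rw [Ne, ZMod.natCast_eq_zero_iff]
    intro hdvd
    exact hlp ((Nat.prime_dvd_prime_iff_eq hℓ hp).mp hdvd)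
  have hC0 : ((c:ℤ) : K) ≠ 0 := by
    rw [Ne, ZMod.intCast_zmod_eq_zero_iff_dvd]; exact hlc
  have hA0 : A ≠ 0 := mul_ne_zero (mul_ne_zero hP0 hC0) (inv_ne_zero h40)
  have hNNGG : NN = GG + 1 := by rw [hNNdef, hGGdef]; push_cast; ring
  have hrel : NN^(2*g+1) * ((p:K) * ((c:ℤ):K))^(2*g) = (4 * GG)^(2*g) * B^(2*g+1) := by
    have h0 : (((2*(g:ℤ)+1)^(2*g+1) * ((p:ℤ)*c)^(2*g)
        - (8*(g:ℤ))^(2*g) * b^(2*g+1) : ℤ) : K) = 0 :=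
      (ZMod.intCast_zmod_eq_zero_iff_dvd _ _).mpr hℓD
    push_cast +zetaDelta at h0
    rw [hNNdef, hGGdef, hBdef]
    push_cast +zetaDelta
    linear_combination h0
  have hrel' : NN^(2*g+1) * A^(2*g) = GG^(2*g) * B^(2*g+1) := by
    have h44 : (4:K) * (4:K)⁻¹ = 1 := mul_inv_cancel₀ h40
    calc NN^(2*g+1) * A^(2*g)
        = (NN^(2*g+1) * ((p:K) * ((c:ℤ):K))^(2*g)) * ((4:K)⁻¹)^(2*g) := by
          rw [hAdef]; ring
      _ = ((4 * GG)^(2*g) * B^(2*g+1)) * ((4:K)⁻¹)^(2*g) := by rw [hrel]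
      _ = (GG^(2*g) * B^(2*g+1)) * ((4:K) * (4:K)⁻¹)^(2*g) := by ring
      _ = GG^(2*g) * B^(2*g+1) := by rw [h44, one_pow, mul_one]
  set α : K := -(NN * A) * (GG * B)⁻¹ with hαdef
  have hGB0 : GG * B ≠ 0 := mul_ne_zero hGG0 hB0
  have hα0 : α ≠ 0 := by
    rw [hαdef]
    exact mul_ne_zero (neg_ne_zero.mpr (mul_ne_zero hNN0 hA0)) (inv_ne_zero hGB0)
  have hα2g : NN * α^(2*g) = B := by
    have hexp : α^(2*g) = (NN*A)^(2*g) * ((GG*B)^(2*g))⁻¹ := by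
      rw [hαdef, neg_mul, Even.neg_pow ⟨g, by ring⟩, mul_pow, inv_pow]
    apply mul_right_cancel₀ (pow_ne_zero (2*g) hGB0)
    rw [hexp]
    calc NN * ((NN*A)^(2*g) * ((GG*B)^(2*g))⁻¹) * (GG*B)^(2*g)
        = NN*(NN*A)^(2*g) * (((GG*B)^(2*g))⁻¹ * (GG*B)^(2*g)) := by ring
      _ = NN*(NN*A)^(2*g) := by rw [inv_mul_cancel₀ (pow_ne_zero _ hGB0), mul_one]
      _ = B * (GG*B)^(2*g) := by linear_combination hrel'
  have hGBα : GG * B * α = -(NN * A) := by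
    rw [hαdef]
    rw [mul_comm, mul_assoc, inv_mul_cancel₀ hGB0]
    ring
  have hroot : α^(2*g+1) - B*α - A = 0 := by
    have h5 : NN * (α^(2*g+1) - B*α - A) = 0 := by
      linear_combination α * hα2g - hGBα - B * α * hNNGG
    rcases mul_eq_zero.mp h5 with h' | h'
    · exact absurd h' hNN0
    · exact h'
  have hf : moriPolyMod g p b c ℓ = X ^ (2 * g + 1) - C B * X - C A := rfl
  have hIsRoot : IsRoot (moriPolyMod g p b c ℓ) α := by
    rw [IsRoot, hf]
    simp only [eval_sub, eval_pow, eval_mul, eval_X, eval_C]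
    linear_combination hroot
  obtain ⟨q, hq⟩ := dvd_iff_isRoot.mpr hIsRoot
  have hderiv : derivative (moriPolyMod g p b c ℓ) = C NN * X^(2*g) - C B := by
    rw [hf, derivative_sub, derivative_sub, derivative_X_pow, derivative_C,
      derivative_mul, derivative_X, derivative_C]
    rw [Nat.add_sub_cancel, ← hNNdef]
    ring
  have hqα : eval α q = 0 := by
    have hd := congrArg derivative hq
    rw [hderiv] at hd
    have he := congrArg (eval α) hd
    rw [derivative_mul, derivative_sub, derivative_X, derivative_C] at he
    simp only [eval_sub, eval_add, eval_mul, eval_pow, eval_X, eval_C, sub_self,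
      sub_zero, one_mul, zero_mul, zero_add, mul_zero] at he
    rw [hα2g] at he
    simpa using he.symm
  obtain ⟨h₁, hh⟩ := dvd_iff_isRoot.mpr (show IsRoot q α from hqα)
  have hfact : moriPolyMod g p b c ℓ = (X - C α)^2 * h₁ := by rw [hq, hh]; ring
  -- second derivative gives eval α h₁ ≠ 0
  have hd2 : eval α (derivative (derivative (moriPolyMod g p b c ℓ)))
      = NN * (GG * α^(2*g-1)) := by
    rw [hderiv, derivative_sub, derivative_C]
    rw [derivative_C_mul, derivative_X_pow, ← hGGdef]
    simp [eval_mul, eval_pow]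
  have hh1α : eval α h₁ ≠ 0 := by
    have h6 : 2 * eval α h₁ = NN * (GG * α^(2*g-1)) := by
      rw [← eval_d2_aux α h₁, ← hfact, hd2]
    intro h0
    rw [h0, mul_zero] at h6
    exact (mul_ne_zero hNN0 (mul_ne_zero hGG0 (pow_ne_zero _ hα0))) h6.symm
  -- separability
  have hsf : Squarefree h₁ := by
    intro d hd
    by_contra hu
    have hh₁0 : h₁ ≠ 0 := fun h0 => hh1α (by rw [h0]; simp)
    obtain ⟨k, hk⟩ := hd
    have hdh : d ∣ h₁ := ⟨d*k, by rw [hk]; ring⟩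
    have hdh' : d ∣ derivative h₁ :=
      ⟨derivative d * k + derivative d * k + d * derivative k, by
        rw [hk, derivative_mul, derivative_mul]; ring⟩
    have hdf : d ∣ moriPolyMod g p b c ℓ := hfact ▸ (hdh.mul_left _)
    have hdf' : d ∣ derivative (moriPolyMod g p b c ℓ) := by
      rw [hfact, derivative_mul]
      exact dvd_add (hdh.mul_left _) (hdh'.mul_left _)
    set L := AlgebraicClosure K with hLdef
    set φ := algebraMap K L with hφdef
    have hinj : Function.Injective φ := (algebraMap K L).injective
    have hφne : ∀ x : K, x ≠ 0 → φ x ≠ 0 := fun x hx h0 =>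
      hx (hinj (by rw [h0, map_zero]))
    have hdeg : (d.map φ).degree ≠ 0 := by
      rw [degree_map]
      intro h0
      exact hu (isUnit_iff_degree_eq_zero.mpr h0)
    obtain ⟨β, hβ⟩ := IsAlgClosed.exists_root (d.map φ) hdeg
    -- β is a common root of f and f'
    obtain ⟨e, hef⟩ := hdf
    obtain ⟨e', hef'⟩ := hdf'
    have hβf : eval β ((moriPolyMod g p b c ℓ).map φ) = 0 := by
      rw [hef, Polynomial.map_mul, eval_mul, hβ, zero_mul]
    have hβf' : eval β ((derivative (moriPolyMod g p b c ℓ)).map φ) = 0 := by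
      rw [hef', Polynomial.map_mul, eval_mul, hβ, zero_mul]
    have e1β : β^(2*g+1) - φ B * β - φ A = 0 := by
      rw [hf] at hβf
      simpa [Polynomial.map_sub, Polynomial.map_pow, Polynomial.map_mul,
        eval_sub, eval_pow, eval_mul, eval_X, eval_C] using hβf
    have e2β : φ NN * β^(2*g) - φ B = 0 := by
      rw [hderiv] at hβf'
      simpa [Polynomial.map_sub, Polynomial.map_pow, Polynomial.map_mul,
        eval_sub, eval_pow, eval_mul, eval_X, eval_C] using hβf'
    have e3L : φ NN = φ GG + 1 := by rw [hNNGG, map_add, map_one]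
    have hGBβ : φ GG * φ B * β = -(φ NN * φ A) := by
      linear_combination (-(φ NN)) * e1β + β * e2β - (φ B * β) * e3L
    have hβα : β = φ α := by
      have hGB' : φ GG * φ B ≠ 0 := mul_ne_zero (hφne _ hGG0) (hφne _ hB0)
      have h7 : φ GG * φ B * φ α = -(φ NN * φ A) := by
        rw [← map_mul, ← map_mul, hGBα, map_neg, map_mul]
      exact mul_left_cancel₀ hGB' (hGBβ.trans h7.symm)
    have hdα : eval α d = 0 := by
      apply hinj
      rw [map_zero, ← eval₂_hom, ← eval_map, ← hβα]
      exact hβ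
    obtain ⟨e'', he''⟩ := hdh
    exact hh1α (by rw [he'', eval_mul, hdα, zero_mul])
  exact ⟨α, h₁, hfact, hh1α, PerfectField.separable_iff_squarefree.mpr hsf⟩
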